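/- Let (X,≼) be a partial order. Then (X,≼) has a multi-utility indexed by a countable set if and only if it has a Debreu separable realizer indexed by a countable set. (Equivalently: the geometrical dimension of (X,≼) is countable iff its Debreu dimension is countable.) -/
import Mathlib


/-- A binary relation is a partial order: reflexive, antisymmetric, transitive. -/
def IsPartialOrderRel {X : Type*} (r : X → X → Prop) : Prop :=
  (∀ x, r x x) ∧ (∀ x y, r x y → r y x → x = y) ∧ (∀ x y z, r x y → r y z → r x z)

/-- `r'` extends `r`. -/
def RelExtends {X : Type*} (r r' : X → X → Prop) : Prop :=
  ∀ x y, r x y → r' x y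

/-- `r` is total: any two elements are comparable. -/
def TotalRel {X : Type*} (r : X → X → Prop) : Prop :=
  ∀ x y, r x y ∨ r y x

/-- `r'` is a linear extension of `r`: a total partial order extending `r`. -/
def IsLinearExtension {X : Type*} (r r' : X → X → Prop) : Prop :=
  IsPartialOrderRel r' ∧ TotalRel r' ∧ RelExtends r r'

/-- `x` and `y` are incomparable with respect to `r`. -/
def Incomp {X : Type*} (r : X → X → Prop) (x y : X) : Prop :=
  ¬ r x y ∧ ¬ r y x

/-- `D` is Debreu dense for `r`. -/
def DebreuDense {X : Type*} (r : X → X → Prop) (D : Set X) : Prop :=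
  ∀ x y, r x y → ¬ r y x → ∃ d ∈ D, r x d ∧ r d y

/-- `(X, r)` is Debreu separable: it has a countable Debreu dense subset. -/
def DebreuSeparable {X : Type*} (r : X → X → Prop) : Prop :=
  ∃ D : Set X, D.Countable ∧ DebreuDense r D

/-- The limit of a sequence of binary relations. -/
def LimitRel {X : Type*} (r : ℕ → X → X → Prop) : X → X → Prop :=
  fun x y => ∃ n₀ : ℕ, ∀ n, n₀ ≤ n → r n x y

open scoped Classical

noncomputable section AuxMU

namespace AuxMU

lemma ind_nonneg (P : Prop) [Decidable P] {w : ℝ} (hw : 0 ≤ w) : 0 ≤ if P then w else 0 := by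
  split_ifs <;> simp [hw]

lemma ind_le (P : Prop) [Decidable P] {w : ℝ} (hw : 0 ≤ w) : (if P then w else 0) ≤ w := by
  split_ifs <;> simp [hw]

/-- Summability of indicator-weighted base-`1/3` sums over an injected index. -/
lemma summable_ind {P : Type*} (f : P → ℕ) (hf : Function.Injective f) (A : P → Prop) :
    Summable (fun p => if A p then ((1:ℝ)/3)^(f p) else 0) := by
  have hg : Summable (fun n : ℕ => ((1:ℝ)/3)^n) :=
    summable_geometric_of_lt_one (by norm_num) (by norm_num)
  have h1 : Summable (fun p => ((1:ℝ)/3)^(f p)) := hg.comp_injective hf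
  exact Summable.of_nonneg_of_le (fun p => ind_nonneg _ (by positivity))
    (fun p => ind_le _ (by positivity)) h1

/-- Transfer an indicator sum over `P` to an indicator sum over `ℕ`. -/
lemma tsum_ind_transfer {P : Type*} (f : P → ℕ) (hf : Function.Injective f) (A : P → Prop) :
    ∑' p, (if A p then ((1:ℝ)/3)^(f p) else 0)
      = ∑' n, (if (∃ p, f p = n ∧ A p) then ((1:ℝ)/3)^n else 0) := by
  set F : ℕ → ℝ := fun n => if (∃ p, f p = n ∧ A p) then ((1:ℝ)/3)^n else 0 with hF
  have hsupp : Function.support F ⊆ Set.range f := by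
    intro n hn
    by_cases h : ∃ p, f p = n ∧ A p
    · obtain ⟨p, hp, _⟩ := h
      exact ⟨p, hp⟩
    · simp only [hF, Function.mem_support, if_neg h] at hn
      exact absurd rfl hn
  have := hf.tsum_eq (f := F) hsupp
  rw [← this]
  refine tsum_congr fun p => ?_
  simp only [hF]
  by_cases h : A p
  · rw [if_pos h, if_pos ⟨p, rfl, h⟩]
  · rw [if_neg h, if_neg]
    rintro ⟨p', hp', hA⟩
    exact h (hf hp' ▸ hA)

lemma tsum_ind_nonneg {P : Type*} (f : P → ℕ) (A : P → Prop) :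
    0 ≤ ∑' p, (if A p then ((1:ℝ)/3)^(f p) else 0) := by
  exact tsum_nonneg fun p => ind_nonneg _ (by positivity)

lemma tsum_ind_le {P : Type*} (f : P → ℕ) (hf : Function.Injective f) (A : P → Prop) :
    ∑' p, (if A p then ((1:ℝ)/3)^(f p) else 0) ≤ 3/2 := by
  rw [tsum_ind_transfer f hf A]
  have hg : Summable (fun n : ℕ => ((1:ℝ)/3)^n) :=
    summable_geometric_of_lt_one (by norm_num) (by norm_num)
  have h1 : ∑' n, (if (∃ p, f p = n ∧ A p) then ((1:ℝ)/3)^n else 0) ≤ ∑' n : ℕ, ((1:ℝ)/3)^n := by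
    refine Summable.tsum_le_tsum (fun n => ind_le _ (by positivity)) ?_ hg
    exact Summable.of_nonneg_of_le (fun n => ind_nonneg _ (by positivity))
      (fun n => ind_le _ (by positivity)) hg
  have h2 : ∑' n : ℕ, ((1:ℝ)/3)^n = 3/2 := by
    rw [tsum_geometric_of_lt_one (by norm_num) (by norm_num)]
    norm_num
  linarith

set_option maxHeartbeats 1000000 in
/-- Auxiliary for digit injectivity: asymmetric version. -/
lemma digit_aux (A B : ℕ → Prop) (n₀ : ℕ) (hpre : ∀ m < n₀, (A m ↔ B m))
    (hA : A n₀) (hB : ¬ B n₀) :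
    ∑' n, (if B n then ((1:ℝ)/3)^n else 0) < ∑' n, (if A n then ((1:ℝ)/3)^n else 0) := by
  set w : ℝ := 1/3 with hw
  have hg : Summable (fun n : ℕ => w^n) :=
    summable_geometric_of_lt_one (by norm_num) (by norm_num)
  have hsA : Summable (fun n => if A n then w^n else 0) :=
    Summable.of_nonneg_of_le (fun n => ind_nonneg _ (by positivity))
      (fun n => ind_le _ (by positivity)) hg
  have hsB : Summable (fun n => if B n then w^n else 0) :=
    Summable.of_nonneg_of_le (fun n => ind_nonneg _ (by positivity))
      (fun n => ind_le _ (by positivity)) hg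
  have hsplitA := Summable.sum_add_tsum_nat_add (f := fun n => if A n then w^n else 0) (n₀+1) hsA
  have hsplitB := Summable.sum_add_tsum_nat_add (f := fun n => if B n then w^n else 0) (n₀+1) hsB
  have hpresum : ∑ i ∈ Finset.range n₀, (if A i then w^i else 0)
      = ∑ i ∈ Finset.range n₀, (if B i then w^i else 0) := by
    refine Finset.sum_congr rfl fun i hi => ?_
    have := hpre i (Finset.mem_range.mp hi)
    by_cases h : A i
    · rw [if_pos h, if_pos (this.mp h)]
    · rw [if_neg h, if_neg (fun hb => h (this.mpr hb))]
  have hAn : (if A n₀ then w^n₀ else 0) = w^n₀ := if_pos hA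
  have hBn : (if B n₀ then w^n₀ else 0) = 0 := if_neg hB
  have htailA : (0:ℝ) ≤ ∑' i, (if A (i + (n₀+1)) then w^(i + (n₀+1)) else 0) := by
    exact tsum_nonneg fun i => ind_nonneg _ (by positivity)
  have htailB : ∑' i, (if B (i + (n₀+1)) then w^(i + (n₀+1)) else 0) ≤ w^n₀ / 2 := by
    have h1 : ∑' i, (if B (i + (n₀+1)) then w^(i + (n₀+1)) else 0)
        ≤ ∑' i : ℕ, w^(i + (n₀+1)) := by
      refine Summable.tsum_le_tsum (fun i => ind_le _ (by positivity)) ?_ ?_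
      · exact (summable_nat_add_iff (n₀+1)).mpr hsB
      · exact (summable_nat_add_iff (n₀+1)).mpr hg
    have h2 : ∑' i : ℕ, w^(i + (n₀+1)) = w^(n₀+1) * (3/2) := by
      have : ∀ i : ℕ, w^(i + (n₀+1)) = w^i * w^(n₀+1) := fun i => pow_add w i (n₀+1)
      rw [tsum_congr this, tsum_mul_right, tsum_geometric_of_lt_one (by norm_num) (by norm_num)]
      rw [hw]; norm_num; ring
    have h3 : w^(n₀+1) * (3/2) = w^n₀ / 2 := by
      rw [hw, pow_succ]; ring
    linarith
  have hwpos : (0:ℝ) < w^n₀ := by positivity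
  rw [← hsplitA, ← hsplitB, Finset.sum_range_succ, Finset.sum_range_succ, hAn, hBn, hpresum]
  linarith

/-- Base-3 digit injectivity. -/
lemma digit_injective (A B : ℕ → Prop)
    (h : ∑' n, (if A n then ((1:ℝ)/3)^n else 0) = ∑' n, (if B n then ((1:ℝ)/3)^n else 0)) :
    ∀ n, A n ↔ B n := by
  by_contra hc
  rw [not_forall] at hc
  obtain ⟨n, hn⟩ := hc
  have hex : ∃ n, ¬ (A n ↔ B n) := ⟨n, hn⟩
  set n₀ := Nat.find hex with hn₀
  have hmin := Nat.find_spec hex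
  have hpre : ∀ m < n₀, (A m ↔ B m) := by
    intro m hm
    by_contra hmc
    exact absurd (Nat.find_le hmc : n₀ ≤ m) (not_le.mpr hm)
  by_cases hA : A n₀
  · have hB : ¬ B n₀ := fun hb => hmin ⟨fun _ => hb, fun _ => hA⟩
    exact absurd h (ne_of_gt (digit_aux A B n₀ hpre hA hB))
  · have hB : B n₀ := by
      by_contra hb
      exact hmin ⟨fun ha => absurd ha hA, fun hb' => absurd hb' hb⟩
    exact absurd h (ne_of_lt (digit_aux B A n₀ (fun m hm => (hpre m hm).symm) hB hA))

/-- Any order pulled back from `ℝ` is Debreu separable. -/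
lemma debreuSep_pullback {X : Type*} (w : X → ℝ) :
    DebreuSeparable (fun x y => w x ≤ w y) := by
  set D1 : Set X := ⋃ pq : ℚ × ℚ,
    (if h : ∃ d : X, (pq.1 : ℝ) ≤ w d ∧ w d ≤ (pq.2 : ℝ) then {h.choose} else ∅) with hD1
  set D2 : Set X := ⋃ q : ℚ,
    (if h : ∃ x : X, w x < (q : ℝ) ∧ ∃ y : X, (q : ℝ) < w y ∧ ∀ z, ¬ (w x < w z ∧ w z < w y)
      then {h.choose} else ∅) with hD2
  refine ⟨D1 ∪ D2, ?_, ?_⟩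
  · refine Set.Countable.union ?_ ?_
    · refine Set.countable_iUnion fun pq => ?_
      split_ifs
      · exact Set.countable_singleton _
      · exact Set.countable_empty
    · refine Set.countable_iUnion fun q => ?_
      split_ifs
      · exact Set.countable_singleton _
      · exact Set.countable_empty
  · intro x y hxy hnyx
    have hlt : w x < w y := lt_of_le_of_ne hxy (fun h => hnyx (le_of_eq h.symm))
    by_cases hz : ∃ z, w x < w z ∧ w z < w y
    · obtain ⟨z, hz1, hz2⟩ := hz
      obtain ⟨p, hp1, hp2⟩ := exists_rat_btwn hz1
      obtain ⟨q, hq1, hq2⟩ := exists_rat_btwn hz2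
      have h : ∃ d : X, ((p, q).1 : ℝ) ≤ w d ∧ w d ≤ ((p, q).2 : ℝ) :=
        ⟨z, le_of_lt hp2, le_of_lt hq1⟩
      refine ⟨h.choose, Or.inl ?_, ?_, ?_⟩
      · rw [hD1]
        refine Set.mem_iUnion.mpr ⟨(p, q), ?_⟩
        rw [dif_pos h]
        exact rfl
      · exact le_of_lt (lt_of_lt_of_le hp1 h.choose_spec.1)
      · exact le_of_lt (lt_of_le_of_lt h.choose_spec.2 hq2)
    · obtain ⟨q, hq1, hq2⟩ := exists_rat_btwn hlt
      have h : ∃ x' : X, w x' < (q : ℝ) ∧ ∃ y' : X, (q : ℝ) < w y' ∧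
          ∀ z, ¬ (w x' < w z ∧ w z < w y') :=
        ⟨x, hq1, y, hq2, fun z hc => hz ⟨z, hc⟩⟩
      obtain ⟨hx0q, y0, hy0q, hnoz⟩ := h.choose_spec
      have heq : w h.choose = w x := by
        rcases lt_trichotomy (w h.choose) (w x) with hlt' | heq' | hgt'
        · exact absurd ⟨hlt', lt_trans hq1 hy0q⟩ (hnoz x)
        · exact heq'
        · exact absurd ⟨h.choose, hgt', lt_trans hx0q hq2⟩ hz
      refine ⟨h.choose, Or.inr ?_, le_of_eq heq.symm, ?_⟩
      · rw [hD2]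
        refine Set.mem_iUnion.mpr ⟨q, ?_⟩
        rw [dif_pos h]
        exact rfl
      · show w h.choose ≤ w y
        rw [heq]; exact le_of_lt hlt

/-- A total Debreu separable partial order is represented by a real utility. -/
lemma repr_of_debreuSep {X : Type*} (R : X → X → Prop)
    (hrefl : ∀ x, R x x) (hanti : ∀ x y, R x y → R y x → x = y)
    (htrans : ∀ x y z, R x y → R y z → R x z) (htot : ∀ x y, R x y ∨ R y x)
    (hsep : DebreuSeparable R) :
    ∃ u : X → ℝ, ∀ x y, R x y ↔ u x ≤ u y := by
  obtain ⟨D, hDc, hDd⟩ := hsep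
  haveI : Countable ↥D := hDc.to_subtype
  obtain ⟨f, hf⟩ := (countable_iff_exists_injective ↥D).mp inferInstance
  set t : X → ↥D → ℝ := fun x d =>
    ((1:ℝ)/2)^(f d) * ((if R ↑d x then 1 else 0) + (if R ↑d x ∧ ¬ R x ↑d then 1 else 0)) with ht
  have hgeo : Summable (fun n : ℕ => ((1:ℝ)/2)^n) :=
    summable_geometric_of_lt_one (by norm_num) (by norm_num)
  have hsum : ∀ x, Summable (t x) := by
    intro x
    refine Summable.of_nonneg_of_le (fun d => ?_) (fun d => ?_)
      ((hgeo.comp_injective hf).mul_right 2)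
    · have h1 : (0:ℝ) ≤ (if R ↑d x then (1:ℝ) else 0) + (if R ↑d x ∧ ¬ R x ↑d then 1 else 0) := by
        split_ifs <;> norm_num
      exact mul_nonneg (by positivity) h1
    · have h2 : (if R ↑d x then (1:ℝ) else 0) + (if R ↑d x ∧ ¬ R x ↑d then 1 else 0) ≤ 2 := by
        split_ifs <;> norm_num
      calc t x d ≤ ((1:ℝ)/2)^(f d) * 2 := by
            refine mul_le_mul_of_nonneg_left h2 (by positivity)
        _ = (fun d => ((1:ℝ)/2)^(f d) * 2) d := rfl
  set u : X → ℝ := fun x => ∑' d, t x d with hu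
  have hmono : ∀ x y, R x y → ∀ d, t x d ≤ t y d := by
    intro x y hxy d
    refine mul_le_mul_of_nonneg_left ?_ (by positivity)
    have h1 : (if R ↑d x then (1:ℝ) else 0) ≤ (if R ↑d y then 1 else 0) := by
      by_cases h : R ↑d x
      · rw [if_pos h, if_pos (htrans _ _ _ h hxy)]
      · rw [if_neg h]; split_ifs <;> norm_num
    have h2 : (if R ↑d x ∧ ¬ R x ↑d then (1:ℝ) else 0) ≤
        (if R ↑d y ∧ ¬ R y ↑d then 1 else 0) := by
      by_cases h : R ↑d x ∧ ¬ R x ↑d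
      · rw [if_pos h, if_pos ⟨htrans _ _ _ h.1 hxy, fun hyd => h.2 (htrans _ _ _ hxy hyd)⟩]
      · rw [if_neg h]; split_ifs <;> norm_num
    exact add_le_add h1 h2
  have hstrict : ∀ x y, ¬ R x y → u y < u x := by
    intro x y hnxy
    have hyx : R y x := (htot x y).resolve_left hnxy
    obtain ⟨d, hdD, hyd, hdx⟩ := hDd y x hyx hnxy
    set d' : ↥D := ⟨d, hdD⟩ with hd'
    have hle : ∀ e, t y e ≤ t x e := hmono y x hyx
    have hlt : t y d' < t x d' := by
      by_cases hdy : R d y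
      · have hdeq : d = y := hanti _ _ hdy hyd
        subst hdeq
        show ((1:ℝ)/2)^(f d') * ((if R d d then 1 else 0) + (if R d d ∧ ¬ R d d then 1 else 0))
            < ((1:ℝ)/2)^(f d') * ((if R d x then 1 else 0) + (if R d x ∧ ¬ R x d then 1 else 0))
        rw [if_pos (hrefl d), if_neg (fun hc => hc.2 (hrefl d)), if_pos hdx,
          if_pos ⟨hdx, hnxy⟩]
        have : (0:ℝ) < ((1:ℝ)/2)^(f d') := by positivity
        nlinarith
      · show ((1:ℝ)/2)^(f d') * ((if R d y then 1 else 0) + (if R d y ∧ ¬ R y d then 1 else 0))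
            < ((1:ℝ)/2)^(f d') * ((if R d x then 1 else 0) + (if R d x ∧ ¬ R x d then 1 else 0))
        rw [if_neg hdy, if_neg (fun hc => hdy hc.1), if_pos hdx]
        have h1 : (0:ℝ) ≤ (if R d x ∧ ¬ R x d then (1:ℝ) else 0) := by
          split_ifs <;> norm_num
        have : (0:ℝ) < ((1:ℝ)/2)^(f d') := by positivity
        nlinarith
    exact Summable.tsum_lt_tsum hle hlt (hsum y) (hsum x)
  refine ⟨u, fun x y => ⟨fun hxy => Summable.tsum_le_tsum (hmono x y hxy) (hsum x) (hsum y),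
    fun hle => ?_⟩⟩
  by_contra hnxy
  exact absurd hle (not_le.mpr (hstrict x y hnxy))

end AuxMU

end AuxMU

/-- countable geometrical dimension iff countable Debreu dimension. -/
theorem countable_multiUtility_iff_countable_debreuSeparableRealizer {X : Type*}
    (r : X → X → Prop) (hr : IsPartialOrderRel r) :
    (∃ (I : Type) (u : I → X → ℝ), Countable I ∧
        ∀ x y, r x y ↔ ∀ i, u i x ≤ u i y) ↔
    (∃ (I : Type) (R : I → X → X → Prop), Countable I ∧
        (∀ i, IsLinearExtension r (R i) ∧ DebreuSeparable (R i)) ∧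
        (∀ x y, r x y ↔ ∀ i, R i x y)) := by
  constructor
  · rintro ⟨I, u, hI, hu⟩
    haveI := hI
    obtain ⟨f, hf⟩ := (countable_iff_exists_injective (I × ℚ)).mp inferInstance
    set A : X → I × ℚ → Prop := fun x p => ((p.2 : ℝ) < u p.1 x) with hA
    set c : X → ℝ := fun x => ∑' p, if A x p then ((1:ℝ)/3)^(f p) else 0 with hc
    have hc0 : ∀ x, 0 ≤ c x := fun x => AuxMU.tsum_ind_nonneg f (A x)
    have hc1 : ∀ x, c x ≤ 3/2 := fun x => AuxMU.tsum_ind_le f hf (A x)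
    have hAmono : ∀ x y, r x y → ∀ p, A x p → A y p := by
      intro x y hxy p hp
      exact lt_of_lt_of_le hp ((hu x y).mp hxy p.1)
    have hcmono : ∀ x y, r x y → c x ≤ c y := by
      intro x y hxy
      refine Summable.tsum_le_tsum (fun p => ?_) (AuxMU.summable_ind f hf (A x))
        (AuxMU.summable_ind f hf (A y))
      by_cases h : A x p
      · rw [if_pos h, if_pos (hAmono x y hxy p h)]
      · rw [if_neg h]; exact AuxMU.ind_nonneg _ (by positivity)
    have hcinj : ∀ x y, c x = c y → x = y := by
      intro x y hcxy
      have h1 : ∑' n, (if (∃ p, f p = n ∧ A x p) then ((1:ℝ)/3)^n else 0)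
          = ∑' n, (if (∃ p, f p = n ∧ A y p) then ((1:ℝ)/3)^n else 0) := by
        rw [← AuxMU.tsum_ind_transfer f hf (A x), ← AuxMU.tsum_ind_transfer f hf (A y)]
        exact hcxy
      have h2 := AuxMU.digit_injective _ _ h1
      have h3 : ∀ p, A x p ↔ A y p := by
        intro p
        constructor
        · intro hp
          obtain ⟨p', hp', hA'⟩ := (h2 (f p)).mp ⟨p, rfl, hp⟩
          exact (hf hp') ▸ hA'
        · intro hp
          obtain ⟨p', hp', hA'⟩ := (h2 (f p)).mpr ⟨p, rfl, hp⟩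
          exact (hf hp') ▸ hA'
      have h4 : ∀ i, u i x = u i y := by
        intro i
        by_contra hne
        rcases lt_or_gt_of_ne hne with hlt | hgt
        · obtain ⟨q, hq1, hq2⟩ := exists_rat_btwn hlt
          exact absurd ((h3 (i, q)).mpr hq2) (not_lt.mpr hq1.le)
        · obtain ⟨q, hq1, hq2⟩ := exists_rat_btwn hgt
          exact absurd ((h3 (i, q)).mp hq2) (not_lt.mpr hq1.le)
      exact hr.2.1 x y ((hu x y).mpr (fun i => (h4 i).le)) ((hu y x).mpr (fun i => (h4 i).ge))
    set W : I × ℚ → X → ℝ := fun p x => (if A x p then (1:ℝ) else 0) + c x / 2 with hW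
    have hWmono : ∀ p x y, r x y → W p x ≤ W p y := by
      intro p x y hxy
      refine add_le_add ?_ (by linarith [hcmono x y hxy])
      by_cases h : A x p
      · rw [if_pos h, if_pos (hAmono x y hxy p h)]
      · rw [if_neg h]; split_ifs <;> norm_num
    have hWinj : ∀ p x y, W p x = W p y → x = y := by
      intro p x y hw
      have hwx : W p x = (if A x p then (1:ℝ) else 0) + c x / 2 := rfl
      have hwy : W p y = (if A y p then (1:ℝ) else 0) + c y / 2 := rfl
      by_cases h1 : A x p <;> by_cases h2 : A y p
      · rw [hwx, hwy, if_pos h1, if_pos h2] at hw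
        exact hcinj x y (by linarith)
      · rw [hwx, hwy, if_pos h1, if_neg h2] at hw
        have := hc0 x; have := hc1 y; linarith
      · rw [hwx, hwy, if_neg h1, if_pos h2] at hw
        have := hc0 y; have := hc1 x; linarith
      · rw [hwx, hwy, if_neg h1, if_neg h2] at hw
        exact hcinj x y (by linarith)
    refine ⟨I × ℚ, fun p x y => W p x ≤ W p y, inferInstance, fun p =>
      ⟨⟨⟨fun x => le_refl _, fun x y hxy hyx => hWinj p x y (le_antisymm hxy hyx),
        fun x y z => le_trans⟩, fun x y => le_total _ _, fun x y => hWmono p x y⟩,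
        AuxMU.debreuSep_pullback (W p)⟩, ?_⟩
    intro x y
    constructor
    · intro hxy p
      exact hWmono p x y hxy
    · intro h
      refine (hu x y).mpr fun i => ?_
      by_contra hle
      obtain ⟨q, hq1, hq2⟩ := exists_rat_btwn (not_le.mp hle)
      have hAx : A x (i, q) := hq2
      have hAy : ¬ A y (i, q) := not_lt.mpr hq1.le
      have hWle : W (i, q) x ≤ W (i, q) y := h (i, q)
      have hwx : W (i, q) x = (if A x (i, q) then (1:ℝ) else 0) + c x / 2 := rfl
      have hwy : W (i, q) y = (if A y (i, q) then (1:ℝ) else 0) + c y / 2 := rfl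
      rw [hwx, hwy, if_pos hAx, if_neg hAy] at hWle
      have := hc0 x; have := hc1 y
      linarith
  · rintro ⟨I, R, hI, hlin, hreal⟩
    have hrep : ∀ i, ∃ u : X → ℝ, ∀ x y, R i x y ↔ u x ≤ u y := fun i =>
      AuxMU.repr_of_debreuSep (R i) ((hlin i).1.1).1 ((hlin i).1.1).2.1 ((hlin i).1.1).2.2
        (hlin i).1.2.1 (hlin i).2
    choose uu huu using hrep
    exact ⟨I, uu, hI, fun x y => (hreal x y).trans (forall_congr' fun i => huu i x y)⟩
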